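/- (Decay and strict positivity of H − γ.) Let Λ > 0 and γ = √(Λ/3). Suppose H : [t₀,T) → ℝ is differentiable and ρ, S, Q : [t₀,T) → ℝ are continuous with Q ≥ 0, ρ ≥ 0, 0 ≤ S ≤ ρ, the constraint 6H² = Q + 2ρ + 2Λ and the evolution equation dH/dt = −3H² + (1/2)ρ − (1/6)S + Λ hold, and H(t₀) > γ. Write H₀ = H(t₀). Then for all t ∈ [t₀,T): H(t) − γ ≤ (H₀ − γ) e^{−2γ(t−t₀)}, and H(t) − γ ≥ (H₀ − γ) e^{−3(H₀+γ)(t−t₀)} > 0 (equivalently 1/(H(t)−γ) ≤ (1/(H₀−γ)) e^{3(H₀+γ)(t−t₀)}). -/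

import Mathlib

open Real Set

/-- Helper: a one-sided Gronwall inequality on `[a, b]` with `ε = 0`. -/
theorem gronwall_aux {f f' : ℝ → ℝ} {δ K a b : ℝ}
    (hf : ContinuousOn f (Icc a b))
    (hf' : ∀ x ∈ Ico a b, HasDerivWithinAt f (f' x) (Ici x) x)
    (ha : f a ≤ δ) (bound : ∀ x ∈ Ico a b, f' x ≤ K * f x) :
    ∀ x ∈ Icc a b, f x ≤ δ * Real.exp (K * (x - a)) := by
  intro x hx
  have := le_gronwallBound_of_liminf_deriv_right_le (ε := 0) hf
    (fun y hy r hr => (hf' y hy).liminf_right_slope_le hr) ha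
    (fun y hy => by simpa using bound y hy) x hx
  rwa [gronwallBound_ε0] at this

/-- decay and strict positivity of `H − γ`. Under the constraint
`6H² = Q + 2ρ + 2Λ` (with `Q ≥ 0`, `0 ≤ S ≤ ρ`), the evolution equation
`dH/dt = −3H² + (1/2)ρ − (1/6)S + Λ` and `H(t₀) = H₀ > γ = √(Λ/3)`, one has
`H − γ ≤ (H₀−γ)e^{−2γ(t−t₀)}` and `H − γ ≥ (H₀−γ)e^{−3(H₀+γ)(t−t₀)} > 0`
(equivalently `1/(H−γ) ≤ (1/(H₀−γ)) e^{3(H₀+γ)(t−t₀)}`). -/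
theorem stmt18 (Λ γ t₀ T : ℝ) (hΛ : 0 < Λ) (hγ : γ = Real.sqrt (Λ / 3)) (hT : t₀ < T)
    (H ρ S Q : ℝ → ℝ)
    (hρc : ContinuousOn ρ (Ico t₀ T)) (hSc : ContinuousOn S (Ico t₀ T))
    (hQc : ContinuousOn Q (Ico t₀ T))
    (hQ : ∀ t ∈ Ico t₀ T, 0 ≤ Q t) (hρ : ∀ t ∈ Ico t₀ T, 0 ≤ ρ t)
    (hS : ∀ t ∈ Ico t₀ T, 0 ≤ S t ∧ S t ≤ ρ t)
    (hcon : ∀ t ∈ Ico t₀ T, 6 * H t ^ 2 = Q t + 2 * ρ t + 2 * Λ)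
    (hH : ∀ t ∈ Ico t₀ T,
      HasDerivWithinAt H (-3 * H t ^ 2 + (1 / 2) * ρ t - (1 / 6) * S t + Λ) (Ico t₀ T) t)
    (hH₀ : γ < H t₀) :
    ∀ t ∈ Ico t₀ T,
      H t - γ ≤ (H t₀ - γ) * Real.exp (-(2 * γ * (t - t₀))) ∧
      (H t₀ - γ) * Real.exp (-(3 * (H t₀ + γ) * (t - t₀))) ≤ H t - γ ∧
      0 < H t - γ ∧
      1 / (H t - γ) ≤ (1 / (H t₀ - γ)) * Real.exp (3 * (H t₀ + γ) * (t - t₀)) := by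
  have hγpos : 0 < γ := by
    rw [hγ]; exact Real.sqrt_pos.2 (by linarith)
  have hγsq : γ ^ 2 = Λ / 3 := by
    rw [hγ, sq_sqrt]; linarith
  have hHcont : ContinuousOn H (Ico t₀ T) := fun x hx => (hH x hx).continuousWithinAt
  -- derivative within `Ici x`
  have hH' : ∀ x ∈ Ico t₀ T,
      HasDerivWithinAt H (-3 * H x ^ 2 + (1 / 2) * ρ x - (1 / 6) * S x + Λ) (Ici x) x := by
    intro x hx
    refine (hH x hx).mono_of_mem_nhdsWithin ?_
    rw [mem_nhdsWithin]
    exact ⟨Iio T, isOpen_Iio, hx.2, fun y hy => ⟨le_trans hx.1 hy.2, hy.1⟩⟩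
  -- `H ≥ γ` on the interval
  have hHsq : ∀ t ∈ Ico t₀ T, γ ^ 2 ≤ H t ^ 2 := by
    intro t ht
    have h1 := hcon t ht; have h2 := hQ t ht; have h3 := hρ t ht
    nlinarith [hγsq]
  have hHγ : ∀ t ∈ Ico t₀ T, γ ≤ H t := by
    intro t ht
    by_contra hlt
    push_neg at hlt
    have h1 : H t ≤ -γ := by nlinarith [hHsq t ht]
    have hsub : Icc t₀ t ⊆ Ico t₀ T := Icc_subset_Ico_right ht.2
    have hcsub : ContinuousOn H (Icc t₀ t) := hHcont.mono hsub
    have h0mem : (0 : ℝ) ∈ Icc (H t) (H t₀) := ⟨by linarith, le_of_lt (by linarith)⟩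
    obtain ⟨s, hs, hs0⟩ := intermediate_value_Icc' ht.1 hcsub h0mem
    have := hHsq s (hsub hs)
    rw [hs0] at this
    nlinarith
  -- upper bound
  have upper : ∀ t ∈ Ico t₀ T, H t - γ ≤ (H t₀ - γ) * Real.exp (-(2 * γ) * (t - t₀)) := by
    intro t ht
    have hsub : Icc t₀ t ⊆ Ico t₀ T := Icc_subset_Ico_right ht.2
    have hsub' : Ico t₀ t ⊆ Ico t₀ T := fun y hy => ⟨hy.1, lt_trans hy.2 ht.2⟩
    refine gronwall_aux (f' := fun x => -3 * H x ^ 2 + (1 / 2) * ρ x - (1 / 6) * S x + Λ)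
      ((hHcont.mono hsub).sub continuousOn_const)
      (fun x hx => ((hH' x (hsub' hx)).sub_const γ)) le_rfl ?_ t ⟨ht.1, le_rfl⟩
    intro x hx
    have hx' := hsub' hx
    have h1 := hcon x hx'
    have h2 := hQ x hx'
    have h3 := (hS x hx').1
    have h4 := hHγ x hx'
    simp only [Pi.sub_apply]
    nlinarith [hγsq]
  -- `H ≤ H t₀`
  have hle : ∀ t ∈ Ico t₀ T, H t ≤ H t₀ := by
    intro t ht
    have h1 := upper t ht
    have h2 : Real.exp (-(2 * γ) * (t - t₀)) ≤ 1 := by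
      rw [Real.exp_le_one_iff]
      nlinarith [ht.1]
    nlinarith [Real.exp_pos (-(2 * γ) * (t - t₀))]
  -- lower bound
  have lower : ∀ t ∈ Ico t₀ T,
      γ - H t ≤ (γ - H t₀) * Real.exp (-(3 * (H t₀ + γ)) * (t - t₀)) := by
    intro t ht
    have hsub : Icc t₀ t ⊆ Ico t₀ T := Icc_subset_Ico_right ht.2
    have hsub' : Ico t₀ t ⊆ Ico t₀ T := fun y hy => ⟨hy.1, lt_trans hy.2 ht.2⟩
    refine gronwall_aux
      (f' := fun x => -(-3 * H x ^ 2 + (1 / 2) * ρ x - (1 / 6) * S x + Λ))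
      (continuousOn_const.sub (hHcont.mono hsub))
      (fun x hx => ((hH' x (hsub' hx)).const_sub γ)) le_rfl ?_ t ⟨ht.1, le_rfl⟩
    intro x hx
    have hx' := hsub' hx
    have h1 := hcon x hx'
    have h2 := hQ x hx'
    have h3 := (hS x hx').2
    have h3' := (hS x hx').1
    have hρx := hρ x hx'
    have h4 := hHγ x hx'
    have h5 := hle x hx'
    simp only [Pi.sub_apply]
    nlinarith [hγsq]
  intro t ht
  have hΔ : t₀ ≤ t := ht.1
  have hexp1 := upper t ht
  have hexp2 := lower t ht
  have e1 : -(2 * γ) * (t - t₀) = -(2 * γ * (t - t₀)) := by ring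
  have e2 : -(3 * (H t₀ + γ)) * (t - t₀) = -(3 * (H t₀ + γ) * (t - t₀)) := by ring
  rw [e1] at hexp1
  rw [e2] at hexp2
  have hlow : (H t₀ - γ) * Real.exp (-(3 * (H t₀ + γ) * (t - t₀))) ≤ H t - γ := by
    nlinarith [hexp2]
  have hA : 0 < (H t₀ - γ) * Real.exp (-(3 * (H t₀ + γ) * (t - t₀))) :=
    mul_pos (by linarith) (Real.exp_pos _)
  have hpos : 0 < H t - γ := lt_of_lt_of_le hA hlow
  refine ⟨hexp1, hlow, hpos, ?_⟩
  have h6 := one_div_le_one_div_of_le hA hlow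
  calc 1 / (H t - γ) ≤ 1 / ((H t₀ - γ) * Real.exp (-(3 * (H t₀ + γ) * (t - t₀)))) := h6
    _ = (1 / (H t₀ - γ)) * Real.exp (3 * (H t₀ + γ) * (t - t₀)) := by
        rw [Real.exp_neg]
        field_simp
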